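/- Let e ≥ 2, d ≥ 1. Suppose i^{(1)},…,i^{(d)} ∈ I^δ are words each of length e containing every residue exactly once, with all first letters equal to 0 (e.g. each i^{(a)} ∈ I^{δ,j_a} for some j_a), and let i be their concatenation. Let λ ∈ Λ(n,d) and suppose g is a minimal-length double coset representative in S_{λ^{{e}}} \ S_{de} / S_{(e^d)} (where λ^{{e}} = (λ_1^e,…,λ_n^e) ∈ Λ(ne,de)) such that g·i = l(λ,c) for some coloring c ∈ J^n, where l(λ,c) is the concatenation l^{c_1}-word repeated in divided-power order. Then g = h_λ · b for some block permutation b ∈ B_d ≅ S_d (the subgroup of S_{de} permuting the d consecutive blocks of size e), and ℓ(g) = ℓ(h_λ) + ℓ(b), where h_λ is the product over parts of λ of the shortest permutations h_{λ_t} interleaving λ_t blocks of size e into divided-power order. -/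

import Mathlib

open Finset

/-- The Coxeter length (number of inversions) of a permutation of `Fin M`. -/
def plen {M : ℕ} (g : Equiv.Perm (Fin M)) : ℕ :=
  (Finset.univ.filter (fun p : Fin M × Fin M => p.1 < p.2 ∧ g p.2 < g p.1)).card

def cumsum (lam : ℕ → ℕ) (t : ℕ) : ℕ := ∑ t' ∈ Finset.range t, lam t'

/-- Index of the block (among `K` consecutive blocks with cumulative sizes
`cum`) containing position `p`. -/
def blockIdxOf (cum : ℕ → ℕ) (K p : ℕ) : ℕ :=
  ((Finset.range K).filter (fun k => cum (k + 1) ≤ p)).card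

/-- `u` (positions `0,…,e-1`) is a word in `I^{δ,j}`. -/
def InIDeltaJ (e j : ℕ) (u : ℕ → ℕ) : Prop :=
  u 0 = 0 ∧ u (e - 1) = j ∧
  ∃ S : Finset ℕ, S ⊆ Finset.Ioo 0 (e - 1) ∧
    S.image u = Finset.Icc 1 (j - 1) ∧
    (Finset.Ioo 0 (e - 1) \ S).image u = Finset.Icc (j + 1) (e - 1) ∧
    (∀ a ∈ S, ∀ b ∈ S, a < b → u a < u b) ∧
    (∀ a ∈ Finset.Ioo 0 (e - 1) \ S, ∀ b ∈ Finset.Ioo 0 (e - 1) \ S,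
      a < b → u b < u a)

/-- Membership in the Young subgroup `𝔖_{(e^d)} ≤ 𝔖_{de}` (d blocks of size e). -/
def MemSed (e d : ℕ) (g : Equiv.Perm (Fin (d * e))) : Prop :=
  ∀ p : Fin (d * e), ((g p : ℕ)) / e = ((p : ℕ)) / e

/-- Membership in the Young subgroup `𝔖_{λ^{{e}}} ≤ 𝔖_{de}`, where
`λ^{{e}} = (λ_1^e, …, λ_n^e)`. -/
def MemSLamE (e n d : ℕ) (lam : ℕ → ℕ) (g : Equiv.Perm (Fin (d * e))) : Prop :=
  ∀ p : Fin (d * e),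
    blockIdxOf (fun k => ∑ k' ∈ Finset.range k, lam (k' / e)) (n * e) ((g p : ℕ)) =
    blockIdxOf (fun k => ∑ k' ∈ Finset.range k, lam (k' / e)) (n * e) ((p : ℕ))

/-- Membership in the block permutation group `B_d ≅ 𝔖_d ≤ 𝔖_{de}`:
offsets within blocks of size `e` are preserved and blocks map rigidly to
blocks. -/
def MemBd (e d : ℕ) (g : Equiv.Perm (Fin (d * e))) : Prop :=
  (∀ p : Fin (d * e), (g p : ℕ) % e = (p : ℕ) % e) ∧
  (∀ p p' : Fin (d * e), (p : ℕ) / e = (p' : ℕ) / e →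
    (g p : ℕ) / e = (g p' : ℕ) / e)

theorem Equiv.Perm.apply_inv_self {α : Type*} (f : Equiv.Perm α) (x : α) : f (f⁻¹ x) = x :=
  f.apply_symm_apply x

theorem Equiv.Perm.inv_apply_self {α : Type*} (f : Equiv.Perm α) (x : α) : f⁻¹ (f x) = x :=
  f.symm_apply_apply x

namespace P16


lemma cumsum_succ (lam : ℕ → ℕ) (t : ℕ) :
    cumsum lam (t+1) = cumsum lam t + lam t := Finset.sum_range_succ _ _

lemma cumsum_mono (lam : ℕ → ℕ) {s t : ℕ} (h : s ≤ t) :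
    cumsum lam s ≤ cumsum lam t := by
  unfold cumsum
  exact Finset.sum_le_sum_of_subset (Finset.range_subset_range.2 h)

variable (e n : ℕ) (lam : ℕ → ℕ)

def tO (P : ℕ) : ℕ :=
  Nat.find (p := fun t => P < e * cumsum lam (t+1) ∨ n ≤ t) ⟨n, Or.inr le_rfl⟩

variable {e n lam}

lemma tO_lt (hn : 1 ≤ n) {P : ℕ} (hP : P < e * cumsum lam n) : tO e n lam P < n := by
  have h : tO e n lam P ≤ n - 1 := by
    unfold tO
    apply Nat.find_le
    left
    have : n - 1 + 1 = n := by omega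
    rw [this]; exact hP
  omega

lemma tO_upper (hn : 1 ≤ n) {P : ℕ} (hP : P < e * cumsum lam n) :
    P < e * cumsum lam (tO e n lam P + 1) := by
  have h2 := tO_lt hn hP
  unfold tO at *
  rcases Nat.find_spec (p := fun t => P < e * cumsum lam (t+1) ∨ n ≤ t) ⟨n, Or.inr le_rfl⟩ with h | h
  · exact h
  · omega

lemma tO_lower {P : ℕ} : e * cumsum lam (tO e n lam P) ≤ P := by
  rcases Nat.eq_zero_or_pos (tO e n lam P) with h | h
  · rw [h]; simp [cumsum]
  · unfold tO at *
    have hm := Nat.find_min (p := fun t => P < e * cumsum lam (t+1) ∨ n ≤ t)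
      ⟨n, Or.inr le_rfl⟩ (m := Nat.find (p := fun t => P < e * cumsum lam (t+1) ∨ n ≤ t) ⟨n, Or.inr le_rfl⟩ - 1) (by omega)
    simp only [not_or, not_lt, not_le] at hm
    obtain ⟨hm1, hm2⟩ := hm
    have heq : Nat.find (p := fun t => P < e * cumsum lam (t+1) ∨ n ≤ t) ⟨n, Or.inr le_rfl⟩ - 1 + 1 = Nat.find (p := fun t => P < e * cumsum lam (t+1) ∨ n ≤ t) ⟨n, Or.inr le_rfl⟩ := by omega
    rw [heq] at hm1
    omega

lemma tO_le {P t : ℕ} (h : P < e * cumsum lam (t+1)) : tO e n lam P ≤ t := by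
  unfold tO; exact Nat.find_le (Or.inl h)

lemma tO_mono {X Y : ℕ} (h : X ≤ Y) : tO e n lam X ≤ tO e n lam Y := by
  unfold tO; exact Nat.find_mono (fun _ hp => hp.imp (fun h2 => lt_of_le_of_lt h h2) id)

variable (e n lam)

def qO (P : ℕ) : ℕ := (P - e * cumsum lam (tO e n lam P)) / lam (tO e n lam P)

def aO (P : ℕ) : ℕ := (P - e * cumsum lam (tO e n lam P)) % lam (tO e n lam P)

variable {e n lam}

/-- uniqueness of the decomposition -/
lemma decomp_eq {t q a : ℕ} (ht : t < n) (hq : q < e) (ha : a < lam t) :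
    tO e n lam (e * cumsum lam t + q * lam t + a) = t ∧
    qO e n lam (e * cumsum lam t + q * lam t + a) = q ∧
    aO e n lam (e * cumsum lam t + q * lam t + a) = a := by
  set P := e * cumsum lam t + q * lam t + a with hP
  have hub : P < e * cumsum lam (t+1) := by
    rw [cumsum_succ, Nat.mul_add]
    have : q * lam t + a < e * lam t := by
      calc q * lam t + a < q * lam t + lam t := by omega
      _ = (q+1) * lam t := by ring
      _ ≤ e * lam t := Nat.mul_le_mul_right _ (by omega)
    omega
  have htO : tO e n lam P = t := by
    have h1 : tO e n lam P ≤ t := tO_le hub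
    have h2 := tO_lower (e := e) (n := n) (lam := lam) (P := P)
    by_contra hne
    have hlt : tO e n lam P < t := by omega
    have : cumsum lam (tO e n lam P + 1) ≤ cumsum lam t := cumsum_mono _ (by omega)
    have hup : P < e * cumsum lam (tO e n lam P + 1) := by
      unfold tO at *
      rcases Nat.find_spec (p := fun s => P < e * cumsum lam (s+1) ∨ n ≤ s) ⟨n, Or.inr le_rfl⟩ with h | h
      · exact h
      · omega
    have : e * cumsum lam (tO e n lam P + 1) ≤ e * cumsum lam t := Nat.mul_le_mul_left _ this
    omega
  have hdm : P - e * cumsum lam t = a + lam t * q := by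
    have : q * lam t = lam t * q := Nat.mul_comm _ _
    omega
  refine ⟨htO, ?_, ?_⟩
  · unfold qO; rw [htO, hdm, Nat.add_mul_div_left _ _ (by omega : 0 < lam t),
      Nat.div_eq_of_lt ha, Nat.zero_add]
  · unfold aO; rw [htO, hdm, Nat.add_mul_mod_self_left, Nat.mod_eq_of_lt ha]

lemma decomp_spec (hn : 1 ≤ n) {P : ℕ} (hP : P < e * cumsum lam n) :
    tO e n lam P < n ∧ qO e n lam P < e ∧ aO e n lam P < lam (tO e n lam P) ∧
    P = e * cumsum lam (tO e n lam P) + qO e n lam P * lam (tO e n lam P) + aO e n lam P := by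
  have h1 := tO_lt hn hP
  have h2 := tO_lower (e := e) (n := n) (lam := lam) (P := P)
  have h3 := tO_upper hn hP
  set t := tO e n lam P
  have hband : P - e * cumsum lam t < e * lam t := by
    rw [cumsum_succ, Nat.mul_add] at h3; omega
  have hlampos : 0 < lam t := by
    rcases Nat.eq_zero_or_pos (lam t) with h | h
    · rw [h] at hband; omega
    · exact h
  have hq : qO e n lam P < e := by
    unfold qO
    rw [Nat.div_lt_iff_lt_mul hlampos]
    calc P - e * cumsum lam t < e * lam t := hband
    _ ≤ e * lam t := le_rfl

  refine ⟨h1, hq, Nat.mod_lt _ hlampos, ?_⟩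
  have key : qO e n lam P * lam t + aO e n lam P = P - e * cumsum lam t :=
    Nat.div_add_mod' _ _
  rw [Nat.add_assoc, key, Nat.add_sub_cancel' h2]



lemma rank_eq {α : Type*} [LinearOrder α] [DecidableEq α] (S : Finset α) (f : α → ℕ)
    (hmono : ∀ a ∈ S, ∀ b ∈ S, a < b → f a < f b)
    (hlt : ∀ a ∈ S, f a < S.card) :
    ∀ a ∈ S, f a = (S.filter (fun x => x < a)).card := by
  intro a ha
  have h1 : (S.filter (fun x => x < a)).card ≤ f a := by
    have : ∀ x ∈ S.filter (fun x => x < a), f x ∈ Finset.range (f a) := by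
      intro x hx
      simp only [mem_filter] at hx
      exact Finset.mem_range.2 (hmono x hx.1 a ha hx.2)
    calc (S.filter (fun x => x < a)).card ≤ (Finset.range (f a)).card := by
          apply Finset.card_le_card_of_injOn f this
          intro x hx y hy hxy
          simp only [Finset.coe_filter, Set.mem_setOf_eq] at hx hy
          rcases lt_trichotomy x y with h|h|h
          · exact absurd hxy (Nat.ne_of_lt (hmono x hx.1 y hy.1 h))
          · exact h
          · exact absurd hxy.symm (Nat.ne_of_lt (hmono y hy.1 x hx.1 h))
      _ = f a := Finset.card_range _
  have h2 : f a ≤ (S.filter (fun x => x < a)).card := by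
    have hsplit : S.card = (S.filter (fun x => x < a)).card + 1 +
        (S.filter (fun x => a < x)).card := by
      have hdecomp : S = (S.filter (fun x => x < a)) ∪ {a} ∪ (S.filter (fun x => a < x)) := by
        ext x
        simp only [Finset.mem_union, Finset.mem_filter, Finset.mem_singleton]
        constructor
        · intro hx
          rcases lt_trichotomy x a with h|h|h
          · exact Or.inl (Or.inl ⟨hx, h⟩)
          · exact Or.inl (Or.inr h)
          · exact Or.inr ⟨hx, h⟩
        · rintro ((⟨hx,_⟩|rfl)|⟨hx,_⟩) <;> [exact hx; exact ha; exact hx]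
      have d1 : Disjoint (S.filter (fun x => x < a) ∪ {a}) (S.filter (fun x => a < x)) := by
        simp only [Finset.disjoint_left, Finset.mem_union, Finset.mem_filter,
          Finset.mem_singleton]
        rintro x (⟨_, h⟩|rfl) hx2
        · exact absurd (lt_trans h hx2.2) (lt_irrefl _)
        · exact absurd hx2.2 (lt_irrefl _)
      have d2 : Disjoint (S.filter (fun x => x < a)) ({a} : Finset α) := by
        simp only [Finset.disjoint_left, Finset.mem_filter, Finset.mem_singleton]
        rintro x ⟨_, h⟩ rfl
        exact absurd h (lt_irrefl _)
      conv_lhs => rw [hdecomp]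
      rw [Finset.card_union_of_disjoint d1, Finset.card_union_of_disjoint d2,
        Finset.card_singleton]
    have habove : (S.filter (fun x => a < x)).card ≤ S.card - 1 - f a := by
      have : ∀ x ∈ S.filter (fun x => a < x), f x ∈ Finset.Ioo (f a) S.card := by
        intro x hx
        simp only [mem_filter] at hx
        exact Finset.mem_Ioo.2 ⟨hmono a ha x hx.1 hx.2, hlt x hx.1⟩
      calc (S.filter (fun x => a < x)).card ≤ (Finset.Ioo (f a) S.card).card := by
            apply Finset.card_le_card_of_injOn f this
            intro x hx y hy hxy
            simp only [Finset.coe_filter, Set.mem_setOf_eq] at hx hy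
            rcases lt_trichotomy x y with h|h|h
            · exact absurd hxy (Nat.ne_of_lt (hmono x hx.1 y hy.1 h))
            · exact h
            · exact absurd hxy.symm (Nat.ne_of_lt (hmono y hy.1 x hx.1 h))
        _ = S.card - 1 - f a := by rw [Nat.card_Ioo]; omega
    have := hlt a ha
    omega
  omega

lemma strictmono_id (e : ℕ) (f : ℕ → ℕ)
    (hmono : ∀ r r', r < r' → r' < e → f r < f r')
    (hlt : ∀ r, r < e → f r < e) : ∀ r, r < e → f r = r := by
  intro r hr
  have := rank_eq (Finset.range e) f
    (fun a ha b hb hab => hmono a b hab (Finset.mem_range.1 hb))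
    (by simpa using fun a ha => hlt a ha) r (Finset.mem_range.2 hr)
  rw [this]
  have : (Finset.range e).filter (fun x => x < r) = Finset.range r := by
    ext x
    simp only [Finset.mem_filter, Finset.mem_range]
    omega
  rw [this, Finset.card_range]

lemma plen_inv {M : ℕ} (g : Equiv.Perm (Fin M)) : plen g⁻¹ = plen g := by
  unfold plen
  apply Finset.card_bij' (fun x _ => (g⁻¹ x.2, g⁻¹ x.1)) (fun x _ => (g x.2, g x.1))
  · intro x hx
    simp only [Finset.mem_filter, Finset.mem_univ, true_and] at hx ⊢
    exact ⟨hx.2, by simpa using hx.1⟩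
  · intro x hx
    simp only [Finset.mem_filter, Finset.mem_univ, true_and] at hx ⊢
    exact ⟨hx.2, by simpa using hx.1⟩
  · intro x hx; simp
  · intro x hx; simp

lemma plen_mul_add {M : ℕ} (h b : Equiv.Perm (Fin M))
    (H : ∀ p p' : Fin M, p < p' → b p' < b p → h (b p') < h (b p)) :
    plen (h * b) = plen h + plen b := by
  classical
  set Dom := univ.filter
    (fun x : Fin M × Fin M => x.1 < x.2 ∧ (h * b) x.2 < (h * b) x.1) with hDom
  have hsplit := Finset.card_filter_add_card_filter_not (s := Dom)
    (p := fun x : Fin M × Fin M => b x.2 < b x.1)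
  have part1 : (Dom.filter (fun x : Fin M × Fin M => b x.2 < b x.1)).card = plen b := by
    unfold plen
    congr 1
    ext x
    simp only [hDom, Finset.filter_filter, Finset.mem_filter, Finset.mem_univ, true_and]
    simp only [Equiv.Perm.mul_apply]
    constructor
    · rintro ⟨⟨h1, _⟩, h3⟩; exact ⟨h1, h3⟩
    · rintro ⟨h1, h3⟩; exact ⟨⟨h1, H _ _ h1 h3⟩, h3⟩
  have part2 : (Dom.filter (fun x : Fin M × Fin M => ¬ b x.2 < b x.1)).card = plen h := by
    unfold plen
    apply Finset.card_bij (fun (x : Fin M × Fin M) _ => (b x.1, b x.2))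
    · intro x hx
      simp only [hDom, Finset.filter_filter, Finset.mem_filter, Finset.mem_univ, true_and] at hx ⊢
      simp only [Equiv.Perm.mul_apply] at hx ⊢
      obtain ⟨⟨h1, h2⟩, h3⟩ := hx
      have hne : b x.1 ≠ b x.2 := fun hcon => (ne_of_lt h1) (b.injective hcon)
      exact ⟨lt_of_le_of_ne (not_lt.1 h3) hne, h2⟩
    · intro x hx y hy hxy
      have h1 : b x.1 = b y.1 := congrArg Prod.fst hxy
      have h2 : b x.2 = b y.2 := congrArg Prod.snd hxy
      exact Prod.ext (b.injective h1) (b.injective h2)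
    · intro y hy
      simp only [Finset.mem_filter, Finset.mem_univ, true_and] at hy
      obtain ⟨hy1, hy2⟩ := hy
      refine ⟨(b⁻¹ y.1, b⁻¹ y.2), ?_, ?_⟩
      · simp only [hDom, Finset.filter_filter, Finset.mem_filter, Finset.mem_univ, true_and]
        simp only [Equiv.Perm.mul_apply, Equiv.Perm.apply_inv_self]
        have hx12 : b⁻¹ y.1 < b⁻¹ y.2 := by
          rcases lt_trichotomy (b⁻¹ y.1) (b⁻¹ y.2) with hlt | heq | hgt
          · exact hlt
          · exact absurd (congrArg b heq) (by simp [Equiv.Perm.apply_inv_self, ne_of_lt hy1])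
          · have := H _ _ hgt (by simp [Equiv.Perm.apply_inv_self, hy1])
            simp only [Equiv.Perm.apply_inv_self] at this
            exact absurd hy2 (not_lt.2 (le_of_lt this))
        exact ⟨⟨hx12, hy2⟩, not_lt.2 (le_of_lt hy1)⟩
      · simp [Equiv.Perm.apply_inv_self]
  have : plen (h * b) = Dom.card := rfl
  omega

lemma plen_mul_swap_lt {M : ℕ} (g : Equiv.Perm (Fin M)) (p p' : Fin M)
    (hpp : p < p') (hgp : g p' < g p) :
    plen (g * Equiv.swap p p') < plen g := by
  classical
  set τ : Equiv.Perm (Fin M) := Equiv.swap p p' with hτ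
  have hτp : τ p = p' := Equiv.swap_apply_left _ _
  have hτp' : τ p' = p := Equiv.swap_apply_right _ _
  have hτo : ∀ x : Fin M, x ≠ p → x ≠ p' → τ x = x := fun x h1 h2 =>
    Equiv.swap_apply_of_ne_of_ne h1 h2
  set Dom := univ.filter
    (fun x : Fin M × Fin M => x.1 < x.2 ∧ (g * τ) x.2 < (g * τ) x.1) with hDom
  set Cod := univ.filter
    (fun x : Fin M × Fin M => x.1 < x.2 ∧ g x.2 < g x.1) with hCod
  set keep : Fin M × Fin M → Prop := fun x =>
    (x.1 = p ∧ p < x.2 ∧ x.2 < p') ∨ (x.2 = p' ∧ p < x.1 ∧ x.1 < p') with hkeep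
  have hkeepdec : DecidablePred keep := fun x => by unfold keep; infer_instance
  set F : Fin M × Fin M → Fin M × Fin M := fun x =>
    if keep x then x
    else if τ x.1 < τ x.2 then (τ x.1, τ x.2) else (τ x.2, τ x.1) with hF
  -- basic characterization of Dom membership
  have hmemD : ∀ x : Fin M × Fin M, x ∈ Dom ↔ x.1 < x.2 ∧ g (τ x.2) < g (τ x.1) := by
    intro x
    rw [hDom, Finset.mem_filter]
    simp only [Finset.mem_univ, true_and, Equiv.Perm.mul_apply]
  have hmemC : ∀ x : Fin M × Fin M, x ∈ Cod ↔ x.1 < x.2 ∧ g x.2 < g x.1 := by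
    intro x
    simp only [hCod, Finset.mem_filter, Finset.mem_univ, true_and]
  -- key: F maps Dom into Cod, avoiding (p, p')
  have himg : ∀ x ∈ Dom, F x ∈ Cod ∧ F x ≠ (p, p') := by
    intro x hx
    rw [hmemD] at hx
    obtain ⟨hx1, hx2⟩ := hx
    by_cases hk : keep x
    · rw [hF]; simp only [hk, if_pos]
      rcases hk with ⟨he1, hb1, hb2⟩ | ⟨he1, hb1, hb2⟩
      · -- x = (p, m), p < m < p' ; inversion condition: g x.2 < g p'
        have hne1 : x.2 ≠ p := by intro hcon; rw [hcon] at hb1; exact absurd hb1 (lt_irrefl _)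
        have hne2 : x.2 ≠ p' := ne_of_lt hb2
        rw [he1, hτp, hτo _ hne1 hne2] at hx2
        constructor
        · rw [hmemC]
          exact ⟨hx1, by rw [he1]; exact lt_trans hx2 hgp⟩
        · intro hcon
          have : x.2 = p' := congrArg Prod.snd hcon
          exact hne2 this
      · -- x = (m, p'), p < m < p' ; condition: g p < g x.1
        have hne1 : x.1 ≠ p := ne_of_gt hb1
        have hne2 : x.1 ≠ p' := ne_of_lt hb2
        rw [he1, hτp', hτo _ hne1 hne2] at hx2
        constructor
        · rw [hmemC]
          exact ⟨hx1, by rw [he1]; exact lt_trans hgp hx2⟩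
        · intro hcon
          have : x.1 = p := congrArg Prod.fst hcon
          exact hne1 this
    · rw [hF]; simp only [hk, if_neg, if_false]
      -- first show τ x.1 < τ x.2
      have hτlt : τ x.1 < τ x.2 := by
        by_cases c1 : x.1 = p
        · by_cases c2 : x.2 = p'
          · -- x = (p,p') : not in Dom
            rw [c1, c2, hτp, hτp'] at hx2
            exact absurd hx2 (not_lt.2 (le_of_lt hgp))
          · have hne : x.2 ≠ p := by
              intro hcon; rw [c1, hcon] at hx1; exact absurd hx1 (lt_irrefl _)
            have h2 : p' < x.2 := by
              rcases lt_trichotomy x.2 p' with h | h | h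
              · exact absurd (Or.inl ⟨c1, by rw [← c1]; exact hx1, h⟩) hk
              · exact absurd h c2
              · exact h
            rw [c1, hτp, hτo _ hne c2]
            exact h2
        · by_cases c2 : x.2 = p'
          · have hne : x.1 ≠ p' := by
              intro hcon; rw [c2, hcon] at hx1; exact absurd hx1 (lt_irrefl _)
            have h2 : x.1 < p := by
              rcases lt_trichotomy x.1 p with h | h | h
              · exact h
              · exact absurd h c1
              · exact absurd (Or.inr ⟨c2, h, by rw [← c2]; exact hx1⟩) hk
            rw [c2, hτp', hτo _ c1 hne]
            exact h2
          · by_cases c3 : x.1 = p'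
            · have hne : x.2 ≠ p := by
                intro hcon
                rw [c3, hcon] at hx1
                exact absurd (lt_trans hx1 hpp) (lt_irrefl _)
              rw [c3, hτp', hτo _ hne c2]
              exact lt_trans hpp (by rw [← c3]; exact hx1)
            · by_cases c4 : x.2 = p
              · have := hx1; rw [c4] at this
                rw [c4, hτp, hτo _ c1 c3]
                exact lt_trans this hpp
              · rw [hτo _ c1 c3, hτo _ c4 c2]; exact hx1
      rw [if_pos hτlt]
      constructor
      · rw [hmemC]
        refine ⟨hτlt, ?_⟩
        exact hx2
      · intro hcon
        have e1 : τ x.1 = p := congrArg Prod.fst hcon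
        have e2 : τ x.2 = p' := congrArg Prod.snd hcon
        have e1' : x.1 = τ p := by rw [← e1]; simp [hτ]
        have e2' : x.2 = τ p' := by rw [← e2]; simp [hτ]
        rw [hτp] at e1'; rw [hτp'] at e2'
        rw [e1', e2'] at hx1
        exact absurd (lt_trans hx1 hpp) (lt_irrefl _)
  -- injectivity of F on Dom
  have hτinj : ∀ z z' : Fin M, τ z = τ z' → z = z' := fun z z' hz => τ.injective hz
  have hττ : ∀ z : Fin M, τ (τ z) = z := fun z => Equiv.swap_apply_self _ _ _
  have hinj : ∀ x ∈ Dom, ∀ y ∈ Dom, F x = F y → x = y := by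
    have main : ∀ x ∈ Dom, ∀ y ∈ Dom, keep x → ¬ keep y → F x ≠ F y := by
      intro x hx y hy hkx hky hcon
      rw [hmemD] at hx hy
      rw [hF] at hcon
      simp only [if_pos hkx, if_neg hky] at hcon
      have hyset : ({τ y.1, τ y.2} : Set (Fin M)) = {x.1, x.2} := by
        by_cases hτy : τ y.1 < τ y.2
        · rw [if_pos hτy] at hcon
          rw [Prod.ext_iff] at hcon
          obtain ⟨c1, c2⟩ := hcon
          simp only at c1 c2
          rw [c1, c2]
        · rw [if_neg hτy] at hcon
          rw [Prod.ext_iff] at hcon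
          obtain ⟨c1, c2⟩ := hcon
          simp only at c1 c2
          rw [c1, c2]
          exact Set.pair_comm _ _
      rw [Set.pair_eq_pair_iff] at hyset
      have hys : (y.1 = τ x.1 ∧ y.2 = τ x.2) ∨ (y.1 = τ x.2 ∧ y.2 = τ x.1) := by
        rcases hyset with ⟨c1, c2⟩ | ⟨c1, c2⟩
        · exact Or.inl ⟨by rw [← c1, hττ], by rw [← c2, hττ]⟩
        · exact Or.inr ⟨by rw [← c1, hττ], by rw [← c2, hττ]⟩
      rcases hkx with ⟨he1, hb1, hb2⟩ | ⟨he1, hb1, hb2⟩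
      · -- x = (p, m), p < m < p'; τ x.1 = p', τ x.2 = x.2
        have hne1 : x.2 ≠ p := fun hcon2 => absurd (hcon2 ▸ hb1) (lt_irrefl _)
        have hne2 : x.2 ≠ p' := ne_of_lt hb2
        rw [he1, hτp, hτo _ hne1 hne2] at hys
        rcases hys with ⟨c1, c2⟩ | ⟨c1, c2⟩
        · rw [c1, c2] at hy
          exact absurd (lt_trans hy.1 hb2) (lt_irrefl _)
        · exact hky (Or.inr ⟨c2, by rw [c1]; exact hb1, by rw [c1]; exact hb2⟩)
      · -- x = (m, p'), p < m < p'; τ x.1 = x.1, τ x.2 = p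
        have hne1 : x.1 ≠ p := ne_of_gt hb1
        have hne2 : x.1 ≠ p' := ne_of_lt hb2
        rw [he1, hτp', hτo _ hne1 hne2] at hys
        rcases hys with ⟨c1, c2⟩ | ⟨c1, c2⟩
        · rw [c1, c2] at hy
          exact absurd (lt_trans hy.1 hb1) (lt_irrefl _)
        · exact hky (Or.inl ⟨c1, by rw [c2]; exact hb1, by rw [c2]; exact hb2⟩)
    intro x hx y hy hcon
    by_cases hkx : keep x <;> by_cases hky : keep y
    · rw [hF] at hcon; simpa only [if_pos hkx, if_pos hky] using hcon
    · exact absurd hcon (main x hx y hy hkx hky)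
    · exact absurd hcon.symm (main y hy x hx hky hkx)
    · -- both non-kept : sorted τ images equal
      have hxd := (hmemD x).1 hx
      have hyd := (hmemD y).1 hy
      rw [hF] at hcon
      simp only [if_neg hkx, if_neg hky] at hcon
      have hxset : ({τ x.1, τ x.2} : Set (Fin M)) = {τ y.1, τ y.2} := by
        by_cases h1 : τ x.1 < τ x.2 <;> by_cases h2 : τ y.1 < τ y.2 <;>
          simp only [if_pos, if_neg, h1, h2, if_true, if_false] at hcon <;>
          rw [Prod.ext_iff] at hcon <;> obtain ⟨c1, c2⟩ := hcon <;> simp only at c1 c2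
        · rw [c1, c2]
        · rw [c1, c2]; exact Set.pair_comm _ _
        · rw [c1, c2]; exact Set.pair_comm _ _
        · rw [c1, c2]
      rw [Set.pair_eq_pair_iff] at hxset
      rcases hxset with ⟨c1, c2⟩ | ⟨c1, c2⟩
      · exact Prod.ext (hτinj _ _ c1) (hτinj _ _ c2)
      · have e1 : x.1 = y.2 := hτinj _ _ c1
        have e2 : x.2 = y.1 := hτinj _ _ c2
        rw [e1, e2] at hxd
        exact absurd (lt_trans hxd.1 hyd.1) (lt_irrefl _)
  -- conclude
  have hsub : Dom.image F ⊆ Cod.erase (p, p') := by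
    intro z hz
    rw [Finset.mem_image] at hz
    obtain ⟨x, hx, rfl⟩ := hz
    exact Finset.mem_erase.2 ⟨(himg x hx).2, (himg x hx).1⟩
  have hcard1 : Dom.card = (Dom.image F).card :=
    (Finset.card_image_of_injOn (fun x hx y hy => hinj x hx y hy)).symm
  have hmem : (p, p') ∈ Cod := by
    rw [hmemC]; exact ⟨hpp, hgp⟩
  have : plen (g * τ) = Dom.card := rfl
  have hplg : plen g = Cod.card := rfl
  rw [this, hplg, hcard1]
  calc (Dom.image F).card ≤ (Cod.erase (p, p')).card := Finset.card_le_card hsub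
  _ < Cod.card := Finset.card_erase_lt_of_mem hmem



lemma Lw_exu {e j : ℕ} (he : 2 ≤ e) (hj1 : 1 ≤ j) (hj2 : j ≤ e - 1) {u : ℕ → ℕ}
    (hu : InIDeltaJ e j u) : ∀ i, i < e → ∃! q, q < e ∧ u q = i := by
  obtain ⟨h0, hej, S, hS, himg1, himg2, hmono, hanti⟩ := hu
  -- classification of positions
  have hclass : ∀ q, q < e →
      (q = 0) ∨ (q = e - 1) ∨ (q ∈ S ∧ u q ∈ Finset.Icc 1 (j-1)) ∨
      (q ∈ Finset.Ioo 0 (e-1) \ S ∧ u q ∈ Finset.Icc (j+1) (e-1)) := by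
    intro q hq
    by_cases h1 : q = 0
    · exact Or.inl h1
    by_cases h2 : q = e - 1
    · exact Or.inr (Or.inl h2)
    have hio : q ∈ Finset.Ioo 0 (e-1) := Finset.mem_Ioo.2 ⟨by omega, by omega⟩
    by_cases h3 : q ∈ S
    · exact Or.inr (Or.inr (Or.inl ⟨h3, himg1 ▸ Finset.mem_image_of_mem u h3⟩))
    · exact Or.inr (Or.inr (Or.inr ⟨Finset.mem_sdiff.2 ⟨hio, h3⟩,
        himg2 ▸ Finset.mem_image_of_mem u (Finset.mem_sdiff.2 ⟨hio, h3⟩)⟩))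
  have huval : ∀ q, q < e →
      (q = 0 ∧ u q = 0) ∨ (q = e - 1 ∧ u q = j) ∨
      (q ∈ S ∧ 1 ≤ u q ∧ u q ≤ j - 1) ∨
      (q ∈ Finset.Ioo 0 (e-1) \ S ∧ j + 1 ≤ u q ∧ u q ≤ e - 1) := by
    intro q hq
    rcases hclass q hq with h | h | ⟨h, hv⟩ | ⟨h, hv⟩
    · exact Or.inl ⟨h, h ▸ h0⟩
    · exact Or.inr (Or.inl ⟨h, h ▸ hej⟩)
    · rw [Finset.mem_Icc] at hv; exact Or.inr (Or.inr (Or.inl ⟨h, hv.1, hv.2⟩))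
    · rw [Finset.mem_Icc] at hv; exact Or.inr (Or.inr (Or.inr ⟨h, hv.1, hv.2⟩))
  intro i hi
  -- uniqueness part
  have huniq : ∀ q q', q < e → q' < e → u q = u q' → q = q' := by
    intro q q' hq hq' hval
    rcases huval q hq with ⟨h1, h2⟩ | ⟨h1, h2⟩ | ⟨h1, h2, h3⟩ | ⟨h1, h2, h3⟩ <;>
      rcases huval q' hq' with ⟨k1, k2⟩ | ⟨k1, k2⟩ | ⟨k1, k2, k3⟩ | ⟨k1, k2, k3⟩ <;>
        try omega
    · -- both in S
      rcases lt_trichotomy q q' with hlt | heq | hgt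
      · exact absurd hval (Nat.ne_of_lt (hmono q h1 q' k1 hlt))
      · exact heq
      · exact absurd hval.symm (Nat.ne_of_lt (hmono q' k1 q h1 hgt))
    · rcases lt_trichotomy q q' with hlt | heq | hgt
      · exact absurd hval.symm (Nat.ne_of_lt (hanti q h1 q' k1 hlt))
      · exact heq
      · exact absurd hval (Nat.ne_of_lt (hanti q' k1 q h1 hgt))
  -- existence
  have hex : ∃ q, q < e ∧ u q = i := by
    by_cases hz : i = 0
    · exact ⟨0, by omega, by rw [hz]; exact h0⟩
    by_cases hjj : i = j
    · exact ⟨e - 1, by omega, by rw [hjj]; exact hej⟩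
    by_cases hlt : i < j
    · have : i ∈ Finset.Icc 1 (j-1) := Finset.mem_Icc.2 ⟨by omega, by omega⟩
      rw [← himg1, Finset.mem_image] at this
      obtain ⟨q, hqS, hq⟩ := this
      have := hS hqS
      rw [Finset.mem_Ioo] at this
      exact ⟨q, by omega, hq⟩
    · have : i ∈ Finset.Icc (j+1) (e-1) := Finset.mem_Icc.2 ⟨by omega, by omega⟩
      rw [← himg2, Finset.mem_image] at this
      obtain ⟨q, hqS, hq⟩ := this
      have := (Finset.mem_sdiff.1 hqS).1
      rw [Finset.mem_Ioo] at this
      exact ⟨q, by omega, hq⟩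
  obtain ⟨q, hq1, hq2⟩ := hex
  exact ⟨q, ⟨hq1, hq2⟩, fun q' hq' => huniq q' q hq'.1 hq1 (by rw [hq'.2, hq2])⟩

-- cumulative function of lambda^{e}
lemma cumE_eval (e : ℕ) (he : 1 ≤ e) (lam : ℕ → ℕ) :
    ∀ t j, j ≤ e → (∑ k' ∈ Finset.range (t * e + j), lam (k' / e)) =
      e * cumsum lam t + j * lam t := by
  have hstep : ∀ m : ℕ, (∑ k' ∈ Finset.range (m + 1), lam (k' / e)) =
      (∑ k' ∈ Finset.range m, lam (k' / e)) + lam (m / e) := fun m =>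
    Finset.sum_range_succ _ _
  intro t
  induction t with
  | zero =>
    intro j hj
    induction j with
    | zero => simp [cumsum]
    | succ j ih =>
      have hj' : j ≤ e := by omega
      rw [show (0 * e + (j+1)) = (0 * e + j) + 1 by ring, hstep, ih hj']
      have : (0 * e + j) / e = 0 := by
        apply Nat.div_eq_of_lt; omega
      rw [this]
      ring
  | succ t ih =>
    -- first: value at (t+1)*e + 0 equals value at t*e + e
    intro j
    induction j with
    | zero =>
      intro _
      have : (t+1) * e + 0 = t * e + e := by ring
      rw [this, ih e le_rfl]
      have : cumsum lam (t+1) = cumsum lam t + lam t := Finset.sum_range_succ _ _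
      rw [this]
      ring
    | succ j ihj =>
      intro hj
      have hj' : j ≤ e := by omega
      rw [show ((t+1) * e + (j+1)) = ((t+1) * e + j) + 1 by ring, hstep, ihj hj']
      have : ((t+1) * e + j) / e = t + 1 := by
        rw [Nat.add_comm, Nat.add_mul_div_right _ _ (by omega : 0 < e),
          Nat.div_eq_of_lt (by omega), Nat.zero_add]
      rw [this]
      ring

lemma blockIdx_eval (cum : ℕ → ℕ) (hmono : Monotone cum) (K m X : ℕ)
    (hm : m < K) (h1 : cum m ≤ X) (h2 : X < cum (m+1)) :
    blockIdxOf cum K X = m := by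
  unfold blockIdxOf
  have : (Finset.range K).filter (fun k => cum (k+1) ≤ X) = Finset.range m := by
    ext k
    simp only [Finset.mem_filter, Finset.mem_range]
    constructor
    · rintro ⟨hk, hck⟩
      by_contra hcon
      have : m + 1 ≤ k + 1 := by omega
      have := hmono this
      omega
    · intro hk
      have : cum (k+1) ≤ cum m := hmono (by omega)
      exact ⟨by omega, by omega⟩
  rw [this, Finset.card_range]


lemma Lw_lt {e j : ℕ} (he : 2 ≤ e) (hj1 : 1 ≤ j) (hj2 : j ≤ e - 1) {u : ℕ → ℕ}
    (hu : InIDeltaJ e j u) : ∀ q, q < e → u q < e := by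
  obtain ⟨h0, hej, S, hS, himg1, himg2, hmono, hanti⟩ := hu
  intro q hq
  by_cases h1 : q = 0
  · rw [h1, h0]; omega
  by_cases h2 : q = e - 1
  · rw [h2, hej]; omega
  have hio : q ∈ Finset.Ioo 0 (e-1) := Finset.mem_Ioo.2 ⟨by omega, by omega⟩
  by_cases h3 : q ∈ S
  · have : u q ∈ Finset.Icc 1 (j-1) := himg1 ▸ Finset.mem_image_of_mem u h3
    rw [Finset.mem_Icc] at this
    omega
  · have : u q ∈ Finset.Icc (j+1) (e-1) :=
      himg2 ▸ Finset.mem_image_of_mem u (Finset.mem_sdiff.2 ⟨hio, h3⟩)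
    rw [Finset.mem_Icc] at this
    omega

lemma blk_lt {e d a q : ℕ} (ha : a < d) (hq : q < e) : a * e + q < d * e := by
  have h1 : a * e + q < (a+1) * e := by rw [Nat.add_mul, Nat.one_mul]; omega
  exact lt_of_lt_of_le h1 (Nat.mul_le_mul_right _ (by omega))

end P16

/-- If `g` is a minimal-length double coset representative in
`𝔖_{λ^{{e}}} \ 𝔖_{de} / 𝔖_{(e^d)}` sending the concatenation of `d` words in
`I^δ` (each containing every residue once, starting with `0`) to the
divided-power word `l(λ,c)`, then `g = h_λ · b` for a block permutation
`b ∈ B_d` with `ℓ(g) = ℓ(h_λ) + ℓ(b)`. -/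
theorem double_coset_block_factorization
    (e n d : ℕ) (he : 2 ≤ e) (hn : 1 ≤ n) (hd : 1 ≤ d)
    (lam : ℕ → ℕ) (hlam : ∑ t ∈ Finset.range n, lam t = d)
    (c : ℕ → ℕ) (hc : ∀ t, t < n → 1 ≤ c t ∧ c t ≤ e - 1)
    (Lw : ℕ → ℕ → ℕ) (hLw : ∀ jj, 1 ≤ jj → jj ≤ e - 1 → InIDeltaJ e jj (Lw jj))
    (v : ℕ → ℕ → ℕ)
    (hv0 : ∀ a, a < d → v a 0 = 0)
    (hvbij : ∀ a, a < d → ∀ i, i < e → ∃! q, q < e ∧ v a q = i)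
    (w : ℕ → ℕ) (hw : ∀ p, w p = v (p / e) (p % e))
    (W : ℕ → ℕ)
    (hW : ∀ t, t < n → ∀ q, q < e → ∀ a, a < lam t →
      W (e * cumsum lam t + q * lam t + a) = Lw (c t) q)
    (hlamPerm : Equiv.Perm (Fin (d * e)))
    (hhl : ∀ t, t < n → ∀ a, a < lam t → ∀ q, q < e →
      ∀ (hlt : e * cumsum lam t + a * e + q < d * e),
        ((hlamPerm ⟨e * cumsum lam t + a * e + q, hlt⟩ : Fin (d * e)) : ℕ) =
          e * cumsum lam t + q * lam t + a)
    (g : Equiv.Perm (Fin (d * e)))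
    (hg : ∀ p : Fin (d * e), W ((g p : ℕ)) = w ((p : ℕ)))
    (hmin : ∀ h : Equiv.Perm (Fin (d * e)),
      (∃ u u', MemSLamE e n d lam u ∧ MemSed e d u' ∧ h = u * g * u') →
      plen g ≤ plen h) :
    ∃ b : Equiv.Perm (Fin (d * e)), MemBd e d b ∧ g = hlamPerm * b ∧
      plen g = plen hlamPerm + plen b := by
  classical
  have he0 : 0 < e := by omega
  have hNd : e * cumsum lam n = d * e := by rw [show cumsum lam n = d from hlam]; ring
  -- general facts about positions
  have hplt : ∀ p : Fin (d * e), ((p : ℕ)) / e < d := by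
    intro p
    rw [Nat.div_lt_iff_lt_mul he0]
    exact p.isLt
  have hpmod : ∀ p : Fin (d * e), ((p : ℕ)) % e < e := fun p => Nat.mod_lt _ he0
  have hpsplit : ∀ p : Fin (d * e), ((p : ℕ)) = (p : ℕ) / e * e + (p : ℕ) % e := by
    intro p
    have := Nat.div_add_mod ((p : ℕ)) e
    have h2 : (p:ℕ) / e * e = e * ((p:ℕ)/e) := Nat.mul_comm _ _
    omega
  -- S1 : g is increasing on each e-block
  have S1 : ∀ p p' : Fin (d * e), (p : ℕ) / e = (p' : ℕ) / e → p < p' → g p < g p' := by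
    intro p p' hblk hlt
    by_contra hcon
    push_neg at hcon
    have hne : g p' ≠ g p := fun h => (ne_of_lt hlt) ((g.injective h).symm)
    have h2 : g p' < g p := lt_of_le_of_ne hcon hne
    have hswap : MemSed e d (Equiv.swap p p') := by
      intro q
      rcases eq_or_ne q p with rfl | h1
      · rw [Equiv.swap_apply_left]; exact hblk.symm
      rcases eq_or_ne q p' with rfl | h2'
      · rw [Equiv.swap_apply_right]; exact hblk
      · rw [Equiv.swap_apply_of_ne_of_ne h1 h2']
    have hle := hmin (g * Equiv.swap p p')
      ⟨1, Equiv.swap p p', fun q => by simp, hswap, by group⟩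
    exact absurd hle (not_le.2 (P16.plen_mul_swap_lt g p p' hlt h2))
  -- block index evaluation for lambda^e blocks
  have hBI : ∀ X : Fin (d * e),
      blockIdxOf (fun k => ∑ k' ∈ Finset.range k, lam (k' / e)) (n * e) ((X : ℕ)) =
      (P16.tO e n lam (X : ℕ)) * e + P16.qO e n lam (X : ℕ) := by
    intro X
    have hX : (X : ℕ) < e * cumsum lam n := by rw [hNd]; exact X.isLt
    obtain ⟨ht, hq, ha, hform⟩ := P16.decomp_spec hn hX
    have hmono : Monotone (fun k => ∑ k' ∈ Finset.range k, lam (k' / e)) := by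
      intro x y hxy
      exact Finset.sum_le_sum_of_subset (Finset.range_subset_range.2 hxy)
    apply P16.blockIdx_eval _ hmono
    · -- index < n * e
      have h1 : P16.tO e n lam (X:ℕ) * e + P16.qO e n lam (X:ℕ) < (P16.tO e n lam (X:ℕ) + 1) * e := by
        rw [Nat.add_mul, Nat.one_mul]; omega
      exact lt_of_lt_of_le h1 (by rw [Nat.mul_comm (n) e, Nat.mul_comm _ e]; exact Nat.mul_le_mul_left _ (by omega))
    · rw [P16.cumE_eval e (by omega) lam _ _ (le_of_lt hq)]
      omega
    · have hstep : P16.tO e n lam (X:ℕ) * e + P16.qO e n lam (X:ℕ) + 1 =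
          P16.tO e n lam (X:ℕ) * e + (P16.qO e n lam (X:ℕ) + 1) := by ring
      rw [hstep, P16.cumE_eval e (by omega) lam _ _ (by omega)]
      have : (P16.qO e n lam (X:ℕ) + 1) * lam (P16.tO e n lam (X:ℕ)) =
          P16.qO e n lam (X:ℕ) * lam (P16.tO e n lam (X:ℕ)) + lam (P16.tO e n lam (X:ℕ)) := by ring
      omega
  -- S2 : g⁻¹ increasing on each run (same t and q)
  have S2 : ∀ P P' : Fin (d * e),
      P16.tO e n lam (P : ℕ) = P16.tO e n lam (P' : ℕ) →
      P16.qO e n lam (P : ℕ) = P16.qO e n lam (P' : ℕ) →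
      P < P' → g⁻¹ P < g⁻¹ P' := by
    intro P P' ht hq hlt
    by_contra hcon
    push_neg at hcon
    have hne : g⁻¹ P' ≠ g⁻¹ P := fun h => (ne_of_lt hlt) ((g⁻¹.injective h).symm)
    have h2 : g⁻¹ P' < g⁻¹ P := lt_of_le_of_ne hcon hne
    have hmem : MemSLamE e n d lam (Equiv.swap P P') := by
      intro q
      rcases eq_or_ne q P with rfl | h1
      · rw [Equiv.swap_apply_left, hBI, hBI, ht, hq]
      rcases eq_or_ne q P' with rfl | h2'
      · rw [Equiv.swap_apply_right, hBI, hBI, ht, hq]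
      · rw [Equiv.swap_apply_of_ne_of_ne h1 h2']
    have hle := hmin (Equiv.swap P P' * g)
      ⟨Equiv.swap P P', 1, hmem, fun q => by simp, by group⟩
    have hplen : plen (Equiv.swap P P' * g) < plen g := by
      have h3 : plen (Equiv.swap P P' * g) = plen (g⁻¹ * Equiv.swap P P') := by
        rw [← P16.plen_inv (g⁻¹ * Equiv.swap P P'), mul_inv_rev, inv_inv,
          Equiv.swap_inv]
      rw [h3, ← P16.plen_inv g]
      exact P16.plen_mul_swap_lt g⁻¹ P P' hlt h2
    exact absurd hle (not_le.2 hplen)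
  -- letter facts
  have hLwu : ∀ t, t < n → ∀ i, i < e → ∃! q, q < e ∧ Lw (c t) q = i := fun t ht i hi =>
    P16.Lw_exu he (hc t ht).1 (hc t ht).2 (hLw (c t) (hc t ht).1 (hc t ht).2) i hi
  have hLw0 : ∀ t, t < n → Lw (c t) 0 = 0 := fun t ht =>
    (hLw (c t) (hc t ht).1 (hc t ht).2).1
  -- v has values < e
  have hvlt : ∀ a, a < d → ∀ r, r < e → v a r < e := by
    intro a ha r hr
    have hQ : ((Finset.range e).image (fun i =>
        if h : i < e then (hvbij a ha i h).choose else 0)) = Finset.range e := by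
      apply Finset.eq_of_subset_of_card_le
      · intro x hx
        rw [Finset.mem_image] at hx
        obtain ⟨i, hi, hix⟩ := hx
        rw [Finset.mem_range] at hi
        rw [dif_pos hi] at hix
        exact Finset.mem_range.2 (hix ▸ (hvbij a ha i hi).choose_spec.1.1)
      · have hinj : Set.InjOn (fun i =>
            if h : i < e then (hvbij a ha i h).choose else 0) (Finset.range e) := by
          intro x hx y hy hxy
          rw [Finset.coe_range, Set.mem_Iio] at hx hy
          simp only at hxy
          rw [dif_pos hx, dif_pos hy] at hxy
          have h1 := (hvbij a ha x hx).choose_spec.1.2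
          have h2 := (hvbij a ha y hy).choose_spec.1.2
          rw [hxy] at h1
          rw [← h1, h2]
        rw [Finset.card_image_of_injOn hinj]
    have : r ∈ (Finset.range e).image (fun i =>
        if h : i < e then (hvbij a ha i h).choose else 0) := by
      rw [hQ]; exact Finset.mem_range.2 hr
    rw [Finset.mem_image] at this
    obtain ⟨i, hi, hix⟩ := this
    rw [Finset.mem_range] at hi
    rw [dif_pos hi] at hix
    have := (hvbij a ha i hi).choose_spec.1.2
    rw [hix] at this
    rw [this]
    exact hi
  -- W value in terms of decomposition
  have hWval : ∀ P : ℕ, P < d * e →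
      W P = Lw (c (P16.tO e n lam P)) (P16.qO e n lam P) := by
    intro P hP
    have hP' : P < e * cumsum lam n := by rw [hNd]; exact hP
    obtain ⟨ht, hq, ha, hform⟩ := P16.decomp_spec hn hP'
    conv_lhs => rw [hform]
    exact hW _ ht _ hq _ ha
  -- w value
  have hwval : ∀ p : Fin (d * e), w (p : ℕ) = v ((p:ℕ)/e) ((p:ℕ)%e) := fun p => hw _
  -- uniqueness of letter position within a source block
  have hvuniq : ∀ a, a < d → ∀ r r', r < e → r' < e → v a r = v a r' → r = r' := by
    intro a ha r r' hr hr' hval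
    have h1 := (hvbij a ha (v a r') (hvlt a ha r' hr')).unique (y₁ := r) (y₂ := r')
    exact h1 ⟨hr, hval⟩ ⟨hr', rfl⟩
  -- Lw uniqueness
  have hLwuniq : ∀ t, t < n → ∀ q q', q < e → q' < e → Lw (c t) q = Lw (c t) q' → q = q' := by
    intro t ht q q' hq hq' hval
    have hlt' : Lw (c t) q' < e :=
      P16.Lw_lt he (hc t ht).1 (hc t ht).2 (hLw (c t) (hc t ht).1 (hc t ht).2) q' hq'
    exact (hLwu t ht (Lw (c t) q') hlt').unique ⟨hq, hval⟩ ⟨hq', rfl⟩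
  -- bounds for runs
  have hrunlt : ∀ s, ∀ q, q < e → ∀ a, a < lam s →
      e * cumsum lam s + q * lam s + a < e * cumsum lam (s+1) := by
    intro s q hq a ha
    rw [P16.cumsum_succ, Nat.mul_add]
    have h1 : (q+1) * lam s ≤ e * lam s := Nat.mul_le_mul_right _ (by omega)
    have h2 : q * lam s + lam s = (q+1) * lam s := by ring
    omega
  have hblke : ∀ s, s ≤ n → e * cumsum lam s ≤ d * e := by
    intro s hs
    rw [← hNd]
    exact Nat.mul_le_mul_left _ (P16.cumsum_mono lam hs)
  have hrunltN : ∀ s, s < n → ∀ q, q < e → ∀ a, a < lam s →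
      e * cumsum lam s + q * lam s + a < d * e := fun s hs q hq a ha =>
    lt_of_lt_of_le (hrunlt s q hq a ha) (hblke (s+1) (by omega))
  -- start-of-block map
  set st : Fin (d * e) → Fin (d * e) := fun p =>
    ⟨(p : ℕ) / e * e, lt_of_le_of_lt (Nat.div_mul_le_self _ _) p.isLt⟩ with hst
  have hstdiv : ∀ p : Fin (d * e), ((st p : ℕ)) / e = (p : ℕ) / e := by
    intro p
    simp only [hst]
    exact Nat.mul_div_cancel _ he0
  have hstmod : ∀ p : Fin (d * e), ((st p : ℕ)) % e = 0 := by
    intro p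
    simp only [hst]
    exact Nat.mul_mod_left _ _
  have hstle : ∀ p : Fin (d * e), st p ≤ p := by
    intro p
    rw [Fin.le_def]
    exact Nat.div_mul_le_self _ _
  have hw0 : ∀ p : Fin (d * e), w ((st p : ℕ)) = 0 := by
    intro p
    rw [hwval, hstdiv, hstmod]
    exact hv0 _ (hplt p)
  have hgstle : ∀ p : Fin (d * e), g (st p) ≤ g p := by
    intro p
    rcases eq_or_lt_of_le (hstle p) with heq | hlt
    · rw [heq]
    · exact le_of_lt (S1 _ _ (hstdiv p) hlt)
  -- the letter sets
  set TB : ℕ → ℕ → Finset (Fin (d * e)) := fun i t =>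
    univ.filter (fun P => W (P : ℕ) = i ∧ (P : ℕ) < e * cumsum lam (t+1)) with hTB
  set AA : ℕ → ℕ → Finset (Fin (d * e)) := fun i t =>
    univ.filter (fun p => w (p : ℕ) = i ∧ ((g p : ℕ)) < e * cumsum lam (t+1)) with hAA
  have hmemTB : ∀ i t (P : Fin (d * e)), P ∈ TB i t ↔
      (W (P : ℕ) = i ∧ (P : ℕ) < e * cumsum lam (t+1)) := by
    intro i t P
    simp only [hTB, Finset.mem_filter, Finset.mem_univ, true_and]
  have hmemAA : ∀ i t (p : Fin (d * e)), p ∈ AA i t ↔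
      (w (p : ℕ) = i ∧ ((g p : ℕ)) < e * cumsum lam (t+1)) := by
    intro i t p
    simp only [hAA, Finset.mem_filter, Finset.mem_univ, true_and]
  have cardAATB : ∀ i t, (AA i t).card = (TB i t).card := by
    intro i t
    apply Finset.card_bij (fun p _ => g p)
    · intro p hp
      rw [hmemAA] at hp
      rw [hmemTB]
      exact ⟨by rw [hg p]; exact hp.1, hp.2⟩
    · intro x _ y _ hxy
      exact g.injective hxy
    · intro P hP
      rw [hmemTB] at hP
      refine ⟨g⁻¹ P, ?_, by simp⟩
      rw [hmemAA]
      constructor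
      · rw [← hg (g⁻¹ P)]
        simp only [Equiv.Perm.apply_inv_self]
        exact hP.1
      · simp only [Equiv.Perm.apply_inv_self]
        exact hP.2
  have hXbound : ∀ P : Fin (d * e),
      e * cumsum lam (P16.tO e n lam (P:ℕ)) + P16.aO e n lam (P:ℕ) < d * e := by
    intro P
    have h1 : (P:ℕ) < e * cumsum lam n := by rw [hNd]; exact P.isLt
    obtain ⟨d1, d2, d3, d4⟩ := P16.decomp_spec hn h1
    have h2 := hrunltN _ d1 0 (by omega) _ d3
    rw [Nat.zero_mul, Nat.add_zero] at h2
    exact h2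
  have cardTB : ∀ i, i < e → ∀ t, t < n → (TB i t).card = (TB 0 t).card := by
    intro i hi t ht
    have hdec : ∀ P : Fin (d * e),
        P16.tO e n lam (P : ℕ) < n ∧ P16.qO e n lam (P:ℕ) < e ∧
        P16.aO e n lam (P:ℕ) < lam (P16.tO e n lam (P:ℕ)) ∧
        (P:ℕ) = e * cumsum lam (P16.tO e n lam (P:ℕ)) +
          P16.qO e n lam (P:ℕ) * lam (P16.tO e n lam (P:ℕ)) + P16.aO e n lam (P:ℕ) := by
      intro P
      have h1 : (P:ℕ) < e * cumsum lam n := by rw [hNd]; exact P.isLt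
      exact P16.decomp_spec hn h1
    apply Finset.card_bij (fun (P : Fin (d * e)) (_ : P ∈ TB i t) =>
      (⟨e * cumsum lam (P16.tO e n lam (P:ℕ)) + P16.aO e n lam (P:ℕ),
        hXbound P⟩ : Fin (d * e)))
    · -- maps into TB 0 t
      intro P hP
      obtain ⟨d1, d2, d3, d4⟩ := hdec P
      have d5 : P16.tO e n lam (P:ℕ) ≤ t := P16.tO_le ((hmemTB i t P).1 hP).2
      rw [hmemTB]
      have hXval : e * cumsum lam (P16.tO e n lam (P:ℕ)) + P16.aO e n lam (P:ℕ) =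
          e * cumsum lam (P16.tO e n lam (P:ℕ)) + 0 * lam (P16.tO e n lam (P:ℕ)) +
          P16.aO e n lam (P:ℕ) := by ring
      constructor
      · show W (e * cumsum lam (P16.tO e n lam (P:ℕ)) + P16.aO e n lam (P:ℕ)) = 0
        rw [hXval, hW _ d1 0 (by omega) _ d3]
        exact hLw0 _ d1
      · show e * cumsum lam (P16.tO e n lam (P:ℕ)) + P16.aO e n lam (P:ℕ) <
          e * cumsum lam (t+1)
        calc e * cumsum lam (P16.tO e n lam (P:ℕ)) + P16.aO e n lam (P:ℕ)
            = e * cumsum lam (P16.tO e n lam (P:ℕ)) + 0 * lam (P16.tO e n lam (P:ℕ)) +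
              P16.aO e n lam (P:ℕ) := hXval
        _ < e * cumsum lam (P16.tO e n lam (P:ℕ) + 1) := hrunlt _ 0 (by omega) _ d3
        _ ≤ e * cumsum lam (t+1) := Nat.mul_le_mul_left _ (P16.cumsum_mono lam (by omega))
    · -- injective
      intro P hP P' hP' heq
      obtain ⟨d1, d2, d3, d4⟩ := hdec P
      obtain ⟨e1, e2, e3, e4⟩ := hdec P'
      have hval : e * cumsum lam (P16.tO e n lam (P:ℕ)) + P16.aO e n lam (P:ℕ) =
          e * cumsum lam (P16.tO e n lam (P':ℕ)) + P16.aO e n lam (P':ℕ) :=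
        congrArg (fun x : Fin (d * e) => (x : ℕ)) heq
      have hu1 := P16.decomp_eq (e := e) d1 (by omega : (0:ℕ) < e) d3
      have hu2 := P16.decomp_eq (e := e) e1 (by omega : (0:ℕ) < e) e3
      rw [Nat.zero_mul, Nat.add_zero] at hu1 hu2
      rw [hval] at hu1
      have hts : P16.tO e n lam (P:ℕ) = P16.tO e n lam (P':ℕ) := by
        rw [← hu1.1, hu2.1]
      have has : P16.aO e n lam (P:ℕ) = P16.aO e n lam (P':ℕ) := by
        rw [← hu1.2.2, hu2.2.2]
      have hWP : W (P:ℕ) = i := ((hmemTB i t P).1 hP).1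
      have hWP' : W (P':ℕ) = i := ((hmemTB i t P').1 hP').1
      have hwq : Lw (c (P16.tO e n lam (P:ℕ))) (P16.qO e n lam (P:ℕ)) =
          Lw (c (P16.tO e n lam (P:ℕ))) (P16.qO e n lam (P':ℕ)) := by
        rw [← hWval _ P.isLt, hWP]
        rw [hts, ← hWval _ P'.isLt, hWP']
      have hqs : P16.qO e n lam (P:ℕ) = P16.qO e n lam (P':ℕ) :=
        hLwuniq _ d1 _ _ d2 e2 hwq
      apply Fin.ext
      rw [d4, e4, hts, has, hqs]
    · -- surjective
      intro Q hQ
      obtain ⟨hWQ, hQlt⟩ := (hmemTB 0 t Q).1 hQ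
      obtain ⟨d1, d2, d3, d4⟩ := hdec Q
      have hq0 : P16.qO e n lam (Q:ℕ) = 0 := by
        apply hLwuniq _ d1 _ _ d2 (by omega)
        rw [← hWval _ Q.isLt, hWQ, hLw0 _ d1]
      obtain ⟨qi, ⟨hqi1, hqi2⟩, _⟩ := hLwu _ d1 i hi
      have hPlt : e * cumsum lam (P16.tO e n lam (Q:ℕ)) +
          qi * lam (P16.tO e n lam (Q:ℕ)) + P16.aO e n lam (Q:ℕ) < d * e :=
        hrunltN _ d1 _ hqi1 _ d3
      obtain ⟨u1, u2, u3⟩ := P16.decomp_eq (e := e) d1 hqi1 d3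
      refine ⟨⟨_, hPlt⟩, ?_, ?_⟩
      · rw [hmemTB]
        constructor
        · show W (e * cumsum lam (P16.tO e n lam (Q:ℕ)) +
            qi * lam (P16.tO e n lam (Q:ℕ)) + P16.aO e n lam (Q:ℕ)) = i
          rw [hW _ d1 _ hqi1 _ d3]
          exact hqi2
        · show e * cumsum lam (P16.tO e n lam (Q:ℕ)) +
            qi * lam (P16.tO e n lam (Q:ℕ)) + P16.aO e n lam (Q:ℕ) < e * cumsum lam (t+1)
          calc e * cumsum lam (P16.tO e n lam (Q:ℕ)) +
              qi * lam (P16.tO e n lam (Q:ℕ)) + P16.aO e n lam (Q:ℕ)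
              < e * cumsum lam (P16.tO e n lam (Q:ℕ) + 1) := hrunlt _ _ hqi1 _ d3
          _ ≤ e * cumsum lam (t+1) := Nat.mul_le_mul_left _
              (P16.cumsum_mono lam (by
                have := P16.tO_le (e := e) (n := n) (lam := lam) hQlt
                omega))
      · apply Fin.ext
        show e * cumsum lam (P16.tO e n lam
            ((⟨_, hPlt⟩ : Fin (d * e)) : ℕ)) + P16.aO e n lam
            ((⟨_, hPlt⟩ : Fin (d * e)) : ℕ) = (Q : ℕ)
        have hvmk : ((⟨e * cumsum lam (P16.tO e n lam (Q:ℕ)) +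
            qi * lam (P16.tO e n lam (Q:ℕ)) + P16.aO e n lam (Q:ℕ), hPlt⟩ :
            Fin (d * e)) : ℕ) = e * cumsum lam (P16.tO e n lam (Q:ℕ)) +
            qi * lam (P16.tO e n lam (Q:ℕ)) + P16.aO e n lam (Q:ℕ) := rfl
        rw [hvmk, u1, u3]
        conv_rhs => rw [d4]
        rw [hq0, Nat.zero_mul, Nat.add_zero]
  -- C1 : the lambda-block of g p depends only on the source block of p
  have hC1 : ∀ p : Fin (d * e),
      P16.tO e n lam ((g p : ℕ)) = P16.tO e n lam ((g (st p) : ℕ)) := by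
    intro p
    have hi : w (p:ℕ) < e := by rw [hwval]; exact hvlt _ (hplt p) _ (hpmod p)
    have hgstlt : ((g (st p) : ℕ)) < e * cumsum lam n := by rw [hNd]; exact (g (st p)).isLt
    set t := P16.tO e n lam ((g (st p) : ℕ)) with ht_def
    have ht : t < n := P16.tO_lt hn hgstlt
    have hstmem : st p ∈ AA 0 t := by
      rw [hmemAA]
      exact ⟨hw0 p, P16.tO_upper hn hgstlt⟩
    have hmap : ∀ q ∈ AA (w (p:ℕ)) t, st q ∈ AA 0 t := by
      intro q hq
      rw [hmemAA] at hq ⊢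
      refine ⟨hw0 q, lt_of_le_of_lt ?_ hq.2⟩
      exact Fin.le_def.1 (hgstle q)
    have hinjst : ∀ x ∈ AA (w (p:ℕ)) t, ∀ y ∈ AA (w (p:ℕ)) t, st x = st y → x = y := by
      intro x hx y hy hxy
      rw [hmemAA] at hx hy
      have hblk : (x:ℕ)/e = (y:ℕ)/e := by
        have := congrArg (fun z : Fin (d*e) => (z:ℕ)) hxy
        simp only [hst] at this
        exact Nat.eq_of_mul_eq_mul_right he0 this
      have hmod : (x:ℕ)%e = (y:ℕ)%e := by
        apply hvuniq _ (hplt x) _ _ (hpmod x) (hpmod y)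
        have hx1 : v ((x:ℕ)/e) ((x:ℕ)%e) = w (p:ℕ) := by rw [← hwval]; exact hx.1
        have hy1 : v ((y:ℕ)/e) ((y:ℕ)%e) = w (p:ℕ) := by rw [← hwval]; exact hy.1
        rw [hx1, hblk, hy1]
      apply Fin.ext
      rw [hpsplit x, hpsplit y, hblk, hmod]
    have himg : (AA (w (p:ℕ)) t).image st = AA 0 t := by
      apply Finset.eq_of_subset_of_card_le
      · intro x hx
        rw [Finset.mem_image] at hx
        obtain ⟨q, hq, rfl⟩ := hx
        exact hmap q hq
      · have hceq : (AA (w (p:ℕ)) t).card = (AA 0 t).card := by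
          rw [cardAATB, cardAATB, cardTB _ hi _ ht]
        rw [Finset.card_image_of_injOn (fun x hx y hy => hinjst x hx y hy)]
        exact le_of_eq hceq.symm
    obtain ⟨q, hqmem, hqst⟩ := Finset.mem_image.1 (himg ▸ hstmem)
    have hq : q = p := by
      rw [hmemAA] at hqmem
      have hblk : (q:ℕ)/e = (p:ℕ)/e := by
        have := congrArg (fun z : Fin (d*e) => (z:ℕ)) hqst
        simp only [hst] at this
        exact Nat.eq_of_mul_eq_mul_right he0 this
      have hmod : (q:ℕ)%e = (p:ℕ)%e := by
        apply hvuniq _ (hplt q) _ _ (hpmod q) (hpmod p)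
        have h1 : v ((q:ℕ)/e) ((q:ℕ)%e) = w (p:ℕ) := by rw [← hwval]; exact hqmem.1
        have h2 : v ((q:ℕ)/e) ((p:ℕ)%e) = w (p:ℕ) := by rw [hblk, ← hwval]
        rw [h1, h2]
      apply Fin.ext
      rw [hpsplit q, hpsplit p, hblk, hmod]
    subst hq
    have h1 : P16.tO e n lam ((g q : ℕ)) ≤ t := by
      rw [hmemAA] at hqmem
      exact P16.tO_le hqmem.2
    have h2 : t ≤ P16.tO e n lam ((g q : ℕ)) :=
      P16.tO_mono (Fin.le_def.1 (hgstle q))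
    omega
  -- block arithmetic helpers
  have hdivblk : ∀ a r : ℕ, r < e → (a * e + r) / e = a := by
    intro a r hr
    rw [show a * e + r = r + e * a by ring, Nat.add_mul_div_left _ _ he0,
      Nat.div_eq_of_lt hr, Nat.zero_add]
  have hmodblk : ∀ a r : ℕ, r < e → (a * e + r) % e = r := by
    intro a r hr
    rw [show a * e + r = r + a * e by ring, Nat.add_mul_mod_self_right,
      Nat.mod_eq_of_lt hr]
  -- block starts map to q = 0
  have hq0 : ∀ p0 : Fin (d * e), (p0:ℕ) % e = 0 →
      P16.qO e n lam ((g p0 : ℕ)) = 0 := by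
    intro p0 h0
    have h1 : ((g p0 : ℕ)) < e * cumsum lam n := by rw [hNd]; exact (g p0).isLt
    obtain ⟨d1, d2, d3, d4⟩ := P16.decomp_spec hn h1
    apply hLwuniq _ d1 _ _ d2 (by omega)
    rw [← hWval _ (g p0).isLt, hg p0, hwval, h0, hv0 _ (hplt p0), hLw0 _ d1]
  -- the sets D t of block starts hitting lambda-block t
  set D : ℕ → Finset (Fin (d * e)) := fun t =>
    univ.filter (fun p0 => (p0:ℕ) % e = 0 ∧ P16.tO e n lam ((g p0 : ℕ)) = t) with hD
  have hmemDD : ∀ t (p0 : Fin (d*e)), p0 ∈ D t ↔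
      ((p0:ℕ)%e = 0 ∧ P16.tO e n lam ((g p0:ℕ)) = t) := by
    intro t p0
    simp only [hD, Finset.mem_filter, Finset.mem_univ, true_and]
  have hcardD : ∀ t, t < n → (D t).card = lam t := by
    intro t ht
    apply Nat.le_antisymm
    · have h1 : (D t).card ≤ (Finset.range (lam t)).card := by
        apply Finset.card_le_card_of_injOn (fun p0 => P16.aO e n lam ((g p0:ℕ)))
        · intro p0 hp0
          rw [Finset.mem_coe, hmemDD] at hp0
          have h1 : ((g p0 : ℕ)) < e * cumsum lam n := by rw [hNd]; exact (g p0).isLt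
          obtain ⟨d1, d2, d3, d4⟩ := P16.decomp_spec hn h1
          rw [hp0.2] at d3
          exact Finset.mem_range.2 d3
        · intro x hx y hy hxy
          rw [Finset.mem_coe, hmemDD] at hx hy
          have h1 : ((g x : ℕ)) < e * cumsum lam n := by rw [hNd]; exact (g x).isLt
          have h2 : ((g y : ℕ)) < e * cumsum lam n := by rw [hNd]; exact (g y).isLt
          obtain ⟨d1, d2, d3, d4⟩ := P16.decomp_spec hn h1
          obtain ⟨e1, e2, e3, e4⟩ := P16.decomp_spec hn h2
          have hxy' : P16.aO e n lam ((g x:ℕ)) = P16.aO e n lam ((g y:ℕ)) := hxy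
          have : (g x : ℕ) = (g y : ℕ) := by
            rw [d4, e4, hq0 x hx.1, hq0 y hy.1, hx.2, hy.2, hxy']
          exact g.injective (Fin.ext this)
      simpa using h1
    · have hpos : 0 < d * e := by
        have := Nat.mul_le_mul hd he
        omega
      have h1 : (Finset.range (lam t)).card ≤ (D t).card := by
        apply Finset.card_le_card_of_injOn
          (fun a' => g⁻¹ ⟨(e * cumsum lam t + a') % (d * e), Nat.mod_lt _ hpos⟩)
        · intro a' ha'
          rw [Finset.mem_coe, Finset.mem_range] at ha'
          have hXlt : e * cumsum lam t + a' < d * e := by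
            have := hrunltN t ht 0 (by omega) a' ha'
            rw [Nat.zero_mul, Nat.add_zero] at this
            exact this
          have hXmod : (e * cumsum lam t + a') % (d * e) = e * cumsum lam t + a' :=
            Nat.mod_eq_of_lt hXlt
          obtain ⟨u1, u2, u3⟩ := P16.decomp_eq (e := e) ht (by omega : (0:ℕ) < e) ha'
          rw [Nat.zero_mul, Nat.add_zero] at u1 u2 u3
          rw [Finset.mem_coe, hmemDD]
          set P : Fin (d * e) := ⟨(e * cumsum lam t + a') % (d * e), Nat.mod_lt _ hpos⟩
            with hPdef
          have hPval : (P : ℕ) = e * cumsum lam t + a' := hXmod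
          have hWP : W (P : ℕ) = 0 := by
            rw [hPval, show e * cumsum lam t + a' =
              e * cumsum lam t + 0 * lam t + a' by ring, hW _ ht 0 (by omega) _ ha']
            exact hLw0 _ ht
          have hgP : (g (g⁻¹ P) : ℕ) = (P : ℕ) := by
            rw [Equiv.Perm.apply_inv_self]
          constructor
          · -- block start
            have hwP : w ((g⁻¹ P : ℕ)) = 0 := by rw [← hg (g⁻¹ P), hgP, hWP]
            rw [hwval] at hwP
            have := hvuniq _ (hplt (g⁻¹ P)) _ 0 (hpmod (g⁻¹ P)) (by omega)
              (by rw [hwP, hv0 _ (hplt (g⁻¹ P))])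
            exact this
          · rw [hgP, hPval, u1]
        · intro x hx y hy hxy
          rw [Finset.mem_coe, Finset.mem_range] at hx hy
          have hXx : e * cumsum lam t + x < d * e := by
            have := hrunltN t ht 0 (by omega) x hx
            rw [Nat.zero_mul, Nat.add_zero] at this
            exact this
          have hXy : e * cumsum lam t + y < d * e := by
            have := hrunltN t ht 0 (by omega) y hy
            rw [Nat.zero_mul, Nat.add_zero] at this
            exact this
          have := g⁻¹.injective hxy
          have hval : (e * cumsum lam t + x) % (d * e) = (e * cumsum lam t + y) % (d * e) :=
            congrArg (fun z : Fin (d * e) => (z : ℕ)) this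
          rw [Nat.mod_eq_of_lt hXx, Nat.mod_eq_of_lt hXy] at hval
          omega
      simpa using h1
  -- st p is in D (tO (g p))
  have hstD : ∀ p : Fin (d * e), st p ∈ D (P16.tO e n lam ((g p : ℕ))) := by
    intro p
    rw [hmemDD]
    exact ⟨hstmod p, (hC1 p).symm⟩
  -- C2 : the column of g p is the rank of the block of p
  have hC2 : ∀ p : Fin (d * e), P16.aO e n lam ((g p : ℕ)) =
      ((D (P16.tO e n lam ((g p : ℕ)))).filter (fun p2 => p2 < st p)).card := by
    intro p
    have hi : w (p:ℕ) < e := by rw [hwval]; exact hvlt _ (hplt p) _ (hpmod p)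
    set i := w (p:ℕ) with hidef
    set t := P16.tO e n lam ((g p:ℕ)) with htdef
    have hgplt : ((g p : ℕ)) < e * cumsum lam n := by rw [hNd]; exact (g p).isLt
    have ht : t < n := P16.tO_lt hn hgplt
    -- letter-i position in the block of p0
    set lp : Fin (d * e) → Fin (d * e) := fun p0 =>
      ⟨(p0:ℕ)/e * e + (hvbij _ (hplt p0) i hi).choose % e,
        P16.blk_lt (hplt p0) (Nat.mod_lt _ he0)⟩ with hlp
    have hr0lt : ∀ p0 : Fin (d * e), (hvbij _ (hplt p0) i hi).choose < e :=
      fun p0 => (hvbij _ (hplt p0) i hi).choose_spec.1.1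
    have hr0v : ∀ p0 : Fin (d * e), v ((p0:ℕ)/e) ((hvbij _ (hplt p0) i hi).choose) = i :=
      fun p0 => (hvbij _ (hplt p0) i hi).choose_spec.1.2
    have hlpval : ∀ p0 : Fin (d * e),
        (lp p0 : ℕ) = (p0:ℕ)/e * e + (hvbij _ (hplt p0) i hi).choose := by
      intro p0
      simp only [hlp]
      rw [Nat.mod_eq_of_lt (hr0lt p0)]
    have hlpdiv : ∀ p0 : Fin (d * e), ((lp p0 : ℕ))/e = (p0:ℕ)/e := by
      intro p0
      rw [hlpval, hdivblk _ _ (hr0lt p0)]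
    have hlpmod : ∀ p0 : Fin (d * e), ((lp p0 : ℕ))%e = (hvbij _ (hplt p0) i hi).choose := by
      intro p0
      rw [hlpval, hmodblk _ _ (hr0lt p0)]
    have hlpw : ∀ p0 : Fin (d * e), w ((lp p0 : ℕ)) = i := by
      intro p0
      rw [hwval, hlpdiv, hlpmod]
      exact hr0v p0
    have hstlp : ∀ p0 : Fin (d * e), (p0:ℕ)%e = 0 → st (lp p0) = p0 := by
      intro p0 h0
      apply Fin.ext
      show ((lp p0 : ℕ))/e * e = (p0 : ℕ)
      rw [hlpdiv]
      have := hpsplit p0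
      omega
    have hlpt : ∀ p0 : Fin (d * e), (p0:ℕ)%e = 0 →
        P16.tO e n lam ((g (lp p0) : ℕ)) = P16.tO e n lam ((g p0 : ℕ)) := by
      intro p0 h0
      rw [hC1 (lp p0), hstlp p0 h0]
    -- rank lemma application
    have hrank := P16.rank_eq (D t) (fun p0 => P16.aO e n lam ((g (lp p0) : ℕ))) ?_ ?_
    · -- use it at st p
      have hstmem : st p ∈ D t := hstD p
      have hlpst : lp (st p) = p := by
        apply Fin.ext
        rw [hlpval]
        have hchoose : (hvbij _ (hplt (st p)) i hi).choose = (p:ℕ)%e := by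
          apply hvuniq _ (hplt (st p)) _ _ (hr0lt (st p)) (hpmod p)
          have h2 := hr0v (st p)
          rw [h2, hstdiv, hidef, hwval]
        rw [hchoose, hstdiv]
        exact (hpsplit p).symm
      have := hrank (st p) hstmem
      simp only [hlpst] at this
      exact this
    · -- strict monotonicity
      intro p0 hp0 p0' hp0' hlt
      rw [hmemDD] at hp0 hp0'
      have hdiv : (p0:ℕ)/e < (p0':ℕ)/e := by
        have h1 := hpsplit p0
        have h2 := hpsplit p0'
        have h3 : (p0:ℕ) < (p0':ℕ) := hlt
        rw [hp0.1] at h1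
        rw [hp0'.1] at h2
        by_contra hcon
        push_neg at hcon
        have := Nat.mul_le_mul_right e hcon
        omega
      have hxy : lp p0 < lp p0' := by
        rw [Fin.lt_def, hlpval, hlpval]
        calc (p0:ℕ)/e * e + (hvbij _ (hplt p0) i hi).choose
            < (p0:ℕ)/e * e + e := by have := hr0lt p0; omega
        _ = ((p0:ℕ)/e + 1) * e := by ring
        _ ≤ (p0':ℕ)/e * e := Nat.mul_le_mul_right _ (by omega)
        _ ≤ (p0':ℕ)/e * e + _ := Nat.le_add_right _ _
      -- both images decompose in block t with equal q
      have ht1 : P16.tO e n lam ((g (lp p0) : ℕ)) = t := by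
        rw [hlpt p0 hp0.1, hp0.2]
      have ht2 : P16.tO e n lam ((g (lp p0') : ℕ)) = t := by
        rw [hlpt p0' hp0'.1, hp0'.2]
      have hW1 : W ((g (lp p0) : ℕ)) = i := by rw [hg, hlpw]
      have hW2 : W ((g (lp p0') : ℕ)) = i := by rw [hg, hlpw]
      have hq1 : ((g (lp p0) : ℕ)) < e * cumsum lam n := by rw [hNd]; exact (g _).isLt
      have hq2 : ((g (lp p0') : ℕ)) < e * cumsum lam n := by rw [hNd]; exact (g _).isLt
      obtain ⟨d1, d2, d3, d4⟩ := P16.decomp_spec hn hq1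
      obtain ⟨e1, e2, e3, e4⟩ := P16.decomp_spec hn hq2
      have hqeq : P16.qO e n lam ((g (lp p0) : ℕ)) = P16.qO e n lam ((g (lp p0') : ℕ)) := by
        apply hLwuniq _ d1 _ _ d2 e2
        rw [← hWval _ (g _).isLt, hW1, ht1, ← ht2, ← hWval _ (g _).isLt, hW2]
      -- now compare
      by_contra hcon
      push_neg at hcon
      rcases eq_or_lt_of_le hcon with heq | hlta
      · -- equal aO means equal positions
        have : ((g (lp p0') : ℕ)) = ((g (lp p0) : ℕ)) := by
          rw [d4, e4, ht1, ht2, hqeq, heq]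
        have := g.injective (Fin.ext this)
        rw [this] at hxy
        exact absurd hxy (lt_irrefl _)
      · -- g (lp p0') < g (lp p0) in the same run: contradict S2
        have hvlt2 : ((g (lp p0') : ℕ)) < ((g (lp p0) : ℕ)) := by
          rw [d4, e4, ht1, ht2, hqeq]
          omega
        have := S2 (g (lp p0')) (g (lp p0)) (by rw [ht1, ht2])
          (by rw [hqeq]) (by exact hvlt2)
        simp only [Equiv.Perm.inv_apply_self] at this
        exact absurd hxy (not_lt.2 (le_of_lt this))
    · -- values below card
      intro p0 hp0
      rw [hmemDD] at hp0
      have hq1 : ((g (lp p0) : ℕ)) < e * cumsum lam n := by rw [hNd]; exact (g _).isLt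
      obtain ⟨d1, d2, d3, d4⟩ := P16.decomp_spec hn hq1
      rw [hcardD t ht]
      have := hlpt p0 hp0.1
      rw [this, hp0.2] at d3
      exact d3
  -- qO of g p equals the offset of p
  have hqstep : ∀ p : Fin (d * e), P16.qO e n lam ((g p : ℕ)) = (p:ℕ) % e := by
    intro p
    set xr : ℕ → Fin (d * e) := fun r =>
      ⟨(p:ℕ)/e * e + r % e, P16.blk_lt (hplt p) (Nat.mod_lt _ he0)⟩ with hxr
    have hxrval : ∀ r, r < e → (xr r : ℕ) = (p:ℕ)/e * e + r := by
      intro r hr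
      simp only [hxr]
      rw [Nat.mod_eq_of_lt hr]
    have hxrdiv : ∀ r, r < e → ((xr r : ℕ))/e = (p:ℕ)/e := by
      intro r hr
      rw [hxrval r hr, hdivblk _ _ hr]
    have hxrst : ∀ r, r < e → st (xr r) = st p := by
      intro r hr
      apply Fin.ext
      show ((xr r:ℕ))/e * e = (p:ℕ)/e * e
      rw [hxrdiv r hr]
    have hxrT : ∀ r, r < e → P16.tO e n lam ((g (xr r) : ℕ)) =
        P16.tO e n lam ((g (st p) : ℕ)) := by
      intro r hr
      rw [hC1 (xr r), hxrst r hr]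
    have hxrA : ∀ r, r < e → ∀ r', r' < e →
        P16.aO e n lam ((g (xr r) : ℕ)) = P16.aO e n lam ((g (xr r') : ℕ)) := by
      intro r hr r' hr'
      rw [hC2 (xr r), hC2 (xr r'), hxrT r hr, hxrT r' hr', hxrst r hr, hxrst r' hr']
    have key : ∀ r, r < e → P16.qO e n lam ((g (xr r) : ℕ)) = r := by
      apply P16.strictmono_id
      · intro r r' hlt hr'
        have hr : r < e := by omega
        have hxlt : xr r < xr r' := by
          rw [Fin.lt_def, hxrval r hr, hxrval r' hr']
          omega
        have hglt := S1 (xr r) (xr r') (by rw [hxrdiv r hr, hxrdiv r' hr']) hxlt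
        have hq1 : ((g (xr r) : ℕ)) < e * cumsum lam n := by rw [hNd]; exact (g _).isLt
        have hq2 : ((g (xr r') : ℕ)) < e * cumsum lam n := by rw [hNd]; exact (g _).isLt
        obtain ⟨d1, d2, d3, d4⟩ := P16.decomp_spec hn hq1
        obtain ⟨e1, e2, e3, e4⟩ := P16.decomp_spec hn hq2
        have hTeq : P16.tO e n lam ((g (xr r) : ℕ)) =
            P16.tO e n lam ((g (xr r') : ℕ)) := by
          rw [hxrT r hr, hxrT r' hr']
        have hAeq := hxrA r hr r' hr'
        have hglt' : ((g (xr r) : ℕ)) < ((g (xr r') : ℕ)) := hglt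
        rw [d4, e4, ← hTeq, ← hAeq] at hglt'
        have hmul : P16.qO e n lam ((g (xr r) : ℕ)) * lam (P16.tO e n lam ((g (xr r) : ℕ))) <
            P16.qO e n lam ((g (xr r') : ℕ)) * lam (P16.tO e n lam ((g (xr r) : ℕ))) := by
          omega
        exact Nat.lt_of_mul_lt_mul_right hmul
      · intro r hr
        have hq1 : ((g (xr r) : ℕ)) < e * cumsum lam n := by rw [hNd]; exact (g _).isLt
        exact (P16.decomp_spec hn hq1).2.1
    have hxrp : xr ((p:ℕ)%e) = p := by
      apply Fin.ext
      have h2 : (p:ℕ)%e < e := hpmod p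
      show ((xr ((p:ℕ)%e) : ℕ)) = (p : ℕ)
      rw [hxrval _ h2]
      exact (hpsplit p).symm
    have hfin := key ((p:ℕ)%e) (hpmod p)
    rw [hxrp] at hfin
    exact hfin
  -- package the structure of g
  have hTn' : ∀ p : Fin (d*e), P16.tO e n lam ((g p:ℕ)) < n := fun p =>
    P16.tO_lt hn (by rw [hNd]; exact (g p).isLt)
  have hRl' : ∀ p : Fin (d*e),
      ((D (P16.tO e n lam ((g p:ℕ)))).filter (fun p2 => p2 < st p)).card <
        lam (P16.tO e n lam ((g p:ℕ))) := by
    intro p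
    have h := (P16.decomp_spec hn (by rw [hNd]; exact (g p).isLt)).2.2.1
    rw [hC2 p] at h
    exact h
  have hgf' : ∀ p : Fin (d*e), (g p : ℕ) =
      e * cumsum lam (P16.tO e n lam ((g p:ℕ))) +
      ((p:ℕ)%e) * lam (P16.tO e n lam ((g p:ℕ))) +
      ((D (P16.tO e n lam ((g p:ℕ)))).filter (fun p2 => p2 < st p)).card := by
    intro p
    have h := (P16.decomp_spec hn (by rw [hNd]; exact (g p).isLt)).2.2.2
    rw [hC2 p, hqstep p] at h
    exact h
  have hTb' : ∀ p p' : Fin (d*e), (p:ℕ)/e = (p':ℕ)/e →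
      P16.tO e n lam ((g p:ℕ)) = P16.tO e n lam ((g p':ℕ)) ∧
      ((D (P16.tO e n lam ((g p:ℕ)))).filter (fun p2 => p2 < st p)).card =
      ((D (P16.tO e n lam ((g p':ℕ)))).filter (fun p2 => p2 < st p')).card := by
    intro p p' hb
    have hsteq : st p = st p' := by
      apply Fin.ext
      show (p:ℕ)/e*e = (p':ℕ)/e*e
      rw [hb]
    have hTeq : P16.tO e n lam ((g p:ℕ)) = P16.tO e n lam ((g p':ℕ)) := by
      rw [hC1 p, hC1 p', hsteq]
    exact ⟨hTeq, by rw [hTeq, hsteq]⟩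
  have hRm' : ∀ p p' : Fin (d*e), (p:ℕ)/e < (p':ℕ)/e →
      P16.tO e n lam ((g p:ℕ)) = P16.tO e n lam ((g p':ℕ)) →
      ((D (P16.tO e n lam ((g p:ℕ)))).filter (fun p2 => p2 < st p)).card <
      ((D (P16.tO e n lam ((g p':ℕ)))).filter (fun p2 => p2 < st p')).card := by
    intro p p' hb hT
    have hstlt : st p < st p' := by
      rw [Fin.lt_def]
      show (p:ℕ)/e*e < (p':ℕ)/e*e
      exact (Nat.mul_lt_mul_right he0).2 hb
    rw [hT]
    apply Finset.card_lt_card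
    constructor
    · intro x hx
      rw [Finset.mem_filter] at hx ⊢
      exact ⟨hx.1, lt_trans hx.2 hstlt⟩
    · intro hsub
      have h1 : st p ∈ (D (P16.tO e n lam ((g p':ℕ)))).filter (fun p2 => p2 < st p') := by
        rw [Finset.mem_filter]
        refine ⟨?_, hstlt⟩
        have h0 := hstD p
        rw [hT] at h0
        exact h0
      have h2 := hsub h1
      rw [Finset.mem_filter] at h2
      exact absurd h2.2 (lt_irrefl _)
  obtain ⟨T, R, hTn, hRl, hgf, hTb, hRm⟩ :
      ∃ (T : Fin (d*e) → ℕ) (R : Fin (d*e) → ℕ),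
        (∀ p, T p < n) ∧ (∀ p, R p < lam (T p)) ∧
        (∀ p, (g p : ℕ) = e * cumsum lam (T p) + ((p:ℕ)%e) * lam (T p) + R p) ∧
        (∀ p p' : Fin (d*e), (p:ℕ)/e = (p':ℕ)/e → T p = T p' ∧ R p = R p') ∧
        (∀ p p' : Fin (d*e), (p:ℕ)/e < (p':ℕ)/e → T p = T p' → R p < R p') :=
    ⟨fun p => P16.tO e n lam ((g p:ℕ)),
      fun p => ((D (P16.tO e n lam ((g p:ℕ)))).filter (fun p2 => p2 < st p)).card,
      hTn', hRl', hgf', hTb', hRm'⟩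
  -- define the block permutation
  set b : Equiv.Perm (Fin (d*e)) := hlamPerm⁻¹ * g with hbdef
  have hbX : ∀ p : Fin (d*e), e * cumsum lam (T p) + R p * e + (p:ℕ)%e < d * e := by
    intro p
    have h1 : R p * e + (p:ℕ)%e < (R p + 1) * e := by
      rw [Nat.add_mul, Nat.one_mul]
      have := hpmod p
      omega
    have h2 : (R p + 1) * e ≤ lam (T p) * e := Nat.mul_le_mul_right _ (hRl p)
    have h3 : e * cumsum lam (T p) + lam (T p) * e = e * cumsum lam (T p + 1) := by
      rw [P16.cumsum_succ]
      ring
    have h4 : e * cumsum lam (T p + 1) ≤ d * e := hblke _ (hTn p)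
    omega
  have hbapply : ∀ p : Fin (d*e),
      b p = (⟨e * cumsum lam (T p) + R p * e + (p:ℕ)%e, hbX p⟩ : Fin (d*e)) := by
    intro p
    have h1 : hlamPerm ⟨e * cumsum lam (T p) + R p * e + (p:ℕ)%e, hbX p⟩ = g p := by
      apply Fin.ext
      rw [hhl _ (hTn p) _ (hRl p) _ (hpmod p) (hbX p)]
      exact (hgf p).symm
    rw [hbdef]
    show hlamPerm⁻¹ (g p) = _
    rw [← h1, Equiv.Perm.inv_apply_self]
  have hbval : ∀ p : Fin (d*e),
      (b p : ℕ) = e * cumsum lam (T p) + R p * e + (p:ℕ)%e := by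
    intro p
    rw [hbapply p]
  have hBd : MemBd e d b := by
    constructor
    · intro p
      rw [hbval]
      rw [show e * cumsum lam (T p) + R p * e + (p:ℕ)%e
          = (p:ℕ)%e + (cumsum lam (T p) + R p) * e by ring,
        Nat.add_mul_mod_self_right, Nat.mod_eq_of_lt (hpmod p)]
    · intro p p' hb'
      obtain ⟨hT, hR⟩ := hTb p p' hb'
      rw [hbval, hbval, hT, hR,
        show e * cumsum lam (T p') + R p' * e + (p:ℕ)%e
          = (cumsum lam (T p') + R p') * e + (p:ℕ)%e by ring,
        show e * cumsum lam (T p') + R p' * e + (p':ℕ)%e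
          = (cumsum lam (T p') + R p') * e + (p':ℕ)%e by ring,
        hdivblk _ _ (hpmod p), hdivblk _ _ (hpmod p')]
  have hgb : g = hlamPerm * b := by
    rw [hbdef, mul_inv_cancel_left]
  refine ⟨b, hBd, hgb, ?_⟩
  have H : ∀ p p' : Fin (d*e), p < p' → b p' < b p →
      hlamPerm (b p') < hlamPerm (b p) := by
    intro p p' hpp hbb
    have hgp : hlamPerm (b p) = g p := by
      rw [← Equiv.Perm.mul_apply, ← hgb]
    have hgp' : hlamPerm (b p') = g p' := by
      rw [← Equiv.Perm.mul_apply, ← hgb]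
    rw [hgp, hgp']
    have hbb' : (b p' : ℕ) < (b p : ℕ) := hbb
    rw [hbval, hbval] at hbb'
    have hblkle : (p:ℕ)/e ≤ (p':ℕ)/e := Nat.div_le_div_right (le_of_lt hpp)
    rcases eq_or_lt_of_le hblkle with hbeq | hblt
    · exfalso
      obtain ⟨hT, hR⟩ := hTb p p' hbeq
      rw [hT, hR] at hbb'
      have h1 : (p:ℕ)%e < (p':ℕ)%e := by
        have h2 := hpsplit p
        have h3 := hpsplit p'
        have h4 : (p:ℕ) < (p':ℕ) := hpp
        rw [hbeq] at h2
        omega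
      omega
    · rcases lt_trichotomy (T p) (T p') with hTlt | hTeq | hTgt
      · exfalso
        have h1 : R p * e + (p:ℕ)%e < lam (T p) * e := by
          have h2 : R p * e + (p:ℕ)%e < (R p + 1) * e := by
            rw [Nat.add_mul, Nat.one_mul]
            have := hpmod p
            omega
          exact lt_of_lt_of_le h2 (Nat.mul_le_mul_right _ (hRl p))
        have h3 : e * cumsum lam (T p) + lam (T p) * e = e * cumsum lam (T p + 1) := by
          rw [P16.cumsum_succ]
          ring
        have h4 : e * cumsum lam (T p + 1) ≤ e * cumsum lam (T p') :=
          Nat.mul_le_mul_left _ (P16.cumsum_mono lam (by omega))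
        omega
      · exfalso
        have h5 := hRm p p' hblt hTeq
        rw [hTeq] at hbb'
        have h1 : R p * e + (p:ℕ)%e < (R p + 1) * e := by
          rw [Nat.add_mul, Nat.one_mul]
          have := hpmod p
          omega
        have h2 : (R p + 1) * e ≤ R p' * e := Nat.mul_le_mul_right _ (by omega)
        omega
      · rw [Fin.lt_def, hgf p, hgf p']
        have h1 : e * cumsum lam (T p') + ((p':ℕ)%e) * lam (T p') + R p' <
            e * cumsum lam (T p' + 1) := hrunlt _ _ (hpmod p') _ (hRl p')
        have h2 : e * cumsum lam (T p' + 1) ≤ e * cumsum lam (T p) :=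
          Nat.mul_le_mul_left _ (P16.cumsum_mono lam (by omega))
        omega
  calc plen g = plen (hlamPerm * b) := by rw [← hgb]
  _ = plen hlamPerm + plen b := P16.plen_mul_add hlamPerm b H
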